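/- Let a > 2b > 0. Define P₁ = (0, b), P₄ = (0, −b), P₂ = (a√(a(a−2b))/(b−a), b²/(b−a)), P₅ = −P₂, P₃ = (a√(a(a−2b))/(b−a), −b²/(b−a)), P₆ = −P₃. Then each Pᵢ lies on the ellipse x²/a² + y²/b² = 1 and the perimeter of the closed polygon P₁P₂P₃P₄P₅P₆ equals 4(a² − ab + b²)/(a − b). -/

import Mathlib

/-- Euclidean distance between two points of the plane. -/
noncomputable def edist' (p q : ℝ × ℝ) : ℝ :=
  Real.sqrt ((p.1 - q.1)^2 + (p.2 - q.2)^2)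

/-- The type-I self-intersected billiard 6-periodic: its vertices lie on the
ellipse and its perimeter equals `4(a² − ab + b²)/(a − b)`. -/
theorem type1_6periodic (a b : ℝ) (hab : a > 2*b) (hb : b > 0) :
    let P1 : ℝ × ℝ := (0, b)
    let P4 : ℝ × ℝ := (0, -b)
    let P2 : ℝ × ℝ := (a*Real.sqrt (a*(a - 2*b))/(b - a), b^2/(b - a))
    let P5 : ℝ × ℝ := (-P2.1, -P2.2)
    let P3 : ℝ × ℝ := (a*Real.sqrt (a*(a - 2*b))/(b - a), -(b^2/(b - a)))
    let P6 : ℝ × ℝ := (-P3.1, -P3.2)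
    let onE : ℝ × ℝ → Prop := fun p => (p.1/a)^2 + (p.2/b)^2 = 1
    (onE P1 ∧ onE P2 ∧ onE P3 ∧ onE P4 ∧ onE P5 ∧ onE P6) ∧
    edist' P1 P2 + edist' P2 P3 + edist' P3 P4 + edist' P4 P5 +
      edist' P5 P6 + edist' P6 P1 = 4*(a^2 - a*b + b^2)/(a - b) := by
  intro P1 P4 P2 P5 P3 P6 onE
  have ha : (0:ℝ) < a := by linarith
  have hba : b - a ≠ 0 := by intro h; nlinarith
  have hab' : a - b ≠ 0 := by intro h; nlinarith
  have habpos : (0:ℝ) < a - b := by linarith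
  have hs2 : Real.sqrt (a*(a - 2*b)) ^ 2 = a*(a - 2*b) := by
    rw [sq]
    exact Real.mul_self_sqrt (by nlinarith)
  set s := Real.sqrt (a*(a - 2*b)) with hsdef
  have e12 : edist' P1 P2 = a := by
    show Real.sqrt ((0 - a*s/(b-a))^2 + (b - b^2/(b-a))^2) = a
    rw [show (0 - a*s/(b-a))^2 + (b - b^2/(b-a))^2 = a^2 by
      field_simp
      linear_combination (a^2) * hs2]
    exact Real.sqrt_sq ha.le
  have e23 : edist' P2 P3 = 2*b^2/(a-b) := by
    show Real.sqrt ((a*s/(b-a) - a*s/(b-a))^2 + (b^2/(b-a) - -(b^2/(b-a)))^2)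
        = 2*b^2/(a-b)
    rw [show (a*s/(b-a) - a*s/(b-a))^2 + (b^2/(b-a) - -(b^2/(b-a)))^2
        = (2*b^2/(a-b))^2 by field_simp; ring]
    exact Real.sqrt_sq (by positivity)
  have e34 : edist' P3 P4 = a := by
    show Real.sqrt ((a*s/(b-a) - 0)^2 + (-(b^2/(b-a)) - -b)^2) = a
    rw [show (a*s/(b-a) - 0)^2 + (-(b^2/(b-a)) - -b)^2 = a^2 by
      field_simp
      linear_combination (a^2) * hs2]
    exact Real.sqrt_sq ha.le
  have e45 : edist' P4 P5 = a := by
    show Real.sqrt ((0 - -(a*s/(b-a)))^2 + (-b - -(b^2/(b-a)))^2) = a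
    rw [show (0 - -(a*s/(b-a)))^2 + (-b - -(b^2/(b-a)))^2 = a^2 by
      field_simp
      linear_combination (a^2) * hs2]
    exact Real.sqrt_sq ha.le
  have e56 : edist' P5 P6 = 2*b^2/(a-b) := by
    show Real.sqrt ((-(a*s/(b-a)) - -(a*s/(b-a)))^2 + (-(b^2/(b-a)) - -(-(b^2/(b-a))))^2)
        = 2*b^2/(a-b)
    rw [show (-(a*s/(b-a)) - -(a*s/(b-a)))^2 + (-(b^2/(b-a)) - -(-(b^2/(b-a))))^2
        = (2*b^2/(a-b))^2 by field_simp; ring]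
    exact Real.sqrt_sq (by positivity)
  have e61 : edist' P6 P1 = a := by
    show Real.sqrt ((-(a*s/(b-a)) - 0)^2 + (-(-(b^2/(b-a))) - b)^2) = a
    rw [show (-(a*s/(b-a)) - 0)^2 + (-(-(b^2/(b-a))) - b)^2 = a^2 by
      field_simp
      linear_combination (a^2) * hs2]
    exact Real.sqrt_sq ha.le
  constructor
  · refine ⟨?_, ?_, ?_, ?_, ?_, ?_⟩ <;>
      show _ + _ = 1 <;>
      simp only [P2, P3, P5, P6, ← hsdef, neg_div, neg_neg, neg_sq, div_pow, mul_pow, hs2] <;>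
      field_simp <;> ring
  · rw [e12, e23, e34, e45, e56, e61]
    field_simp
    ring
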